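/- arXiv:1710.10044 — 2 statements merged into one kernel-verified Lean document; each statement's English description precedes it below -/
import Mathlib

section
/- Let μ be a probability measure on ℝ with finite first moment and let τ ∈ (0,1). Define the quantile regression loss L(θ) = ∫_ℝ ρ_τ(z − θ) dμ(z), where ρ_τ(u) = u·(τ − 1_{u<0}). Then θ* = F_μ⁻¹(τ) is a minimizer of L over θ ∈ ℝ. -/
open MeasureTheory Set

/-- The CDF of a measure on ℝ: `F(y) = μ((-∞, y])`. -/
noncomputable def cdfFn (μ : Measure ℝ) (y : ℝ) : ℝ := (μ (Iic y)).toReal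

/-- The quantile function (generalized inverse CDF): `F⁻¹(ω) = inf {y | ω ≤ F(y)}`. -/
noncomputable def quantileFn (μ : Measure ℝ) (ω : ℝ) : ℝ := sInf {y : ℝ | ω ≤ cdfFn μ y}

/-- The quantile regression check function `ρ_τ(u) = u (τ - 1_{u < 0})`. -/
noncomputable def checkFn (τ u : ℝ) : ℝ := u * (τ - if u < 0 then 1 else 0)

open ProbabilityTheory Filter Topology

lemma cdfFn_eq_cdf (μ : Measure ℝ) [IsProbabilityMeasure μ] (y : ℝ) :
    cdfFn μ y = cdf μ y := (cdf_eq_real μ y).symm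

lemma checkFn_eq (τ u : ℝ) : checkFn τ u = τ * u + max (-u) 0 := by
  unfold checkFn
  rcases lt_or_ge u 0 with h | h
  · rw [if_pos h, max_eq_left (by linarith)]; ring
  · rw [if_neg (not_lt.2 h), max_eq_right (by linarith)]; ring

section main

variable (μ : Measure ℝ) [IsProbabilityMeasure μ]

lemma integrable_posPart (hint : Integrable (fun x : ℝ => x) μ) (a : ℝ) :
    Integrable (fun z => max (a - z) 0) μ :=
  ((integrable_const a).sub hint).pos_part

lemma step_upper (hint : Integrable (fun x : ℝ => x) μ) {a b : ℝ} (hab : a ≤ b) :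
    (∫ z, max (b - z) 0 ∂μ) ≤ (∫ z, max (a - z) 0 ∂μ) + (b - a) * cdfFn μ b := by
  have hind : Integrable ((Iic b).indicator (fun _ => (b - a : ℝ))) μ :=
    (integrable_const (b - a)).indicator measurableSet_Iic
  have hmono : ∀ z : ℝ, max (b - z) 0 ≤
      max (a - z) 0 + (Iic b).indicator (fun _ => (b - a : ℝ)) z := by
    intro z
    rcases le_or_gt z b with h | h
    · rw [indicator_of_mem (mem_Iic.2 h)]
      have : b - z ≤ max (a - z) 0 + (b - a) := by
        have := le_max_left (a - z) 0; linarith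
      exact max_le this (by have := le_max_right (a - z) 0; linarith)
    · rw [indicator_of_notMem (by simpa using h.not_ge)]
      have h1 : max (b - z) 0 = 0 := max_eq_right (by linarith)
      have := le_max_right (a - z) 0
      rw [h1]; linarith
  have := integral_mono (integrable_posPart μ hint b)
    ((integrable_posPart μ hint a).add hind) hmono
  simp only [Pi.add_apply] at this
  rw [integral_add (integrable_posPart μ hint a) hind,
    integral_indicator_const _ measurableSet_Iic] at this
  simpa [cdfFn, smul_eq_mul, mul_comm, measureReal_def] using this

lemma step_lower (hint : Integrable (fun x : ℝ => x) μ) {a b : ℝ} (hab : a ≤ b) :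
    (∫ z, max (a - z) 0 ∂μ) + (b - a) * cdfFn μ a ≤ ∫ z, max (b - z) 0 ∂μ := by
  have hind : Integrable ((Iic a).indicator (fun _ => (b - a : ℝ))) μ :=
    (integrable_const (b - a)).indicator measurableSet_Iic
  have hmono : ∀ z : ℝ,
      max (a - z) 0 + (Iic a).indicator (fun _ => (b - a : ℝ)) z ≤ max (b - z) 0 := by
    intro z
    rcases le_or_gt z a with h | h
    · rw [indicator_of_mem (mem_Iic.2 h)]
      have h1 : max (a - z) 0 = a - z := max_eq_left (by linarith)
      have h2 : b - z ≤ max (b - z) 0 := le_max_left _ _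
      rw [h1]; linarith
    · rw [indicator_of_notMem (by simpa using h.not_ge)]
      have h1 : max (a - z) 0 ≤ max (b - z) 0 :=
        max_le_max (by linarith) le_rfl
      linarith
  have := integral_mono ((integrable_posPart μ hint a).add hind)
    (integrable_posPart μ hint b) hmono
  simp only [Pi.add_apply] at this
  rw [integral_add (integrable_posPart μ hint a) hind,
    integral_indicator_const _ measurableSet_Iic] at this
  simpa [cdfFn, smul_eq_mul, mul_comm, measureReal_def] using this

lemma loss_eq (hint : Integrable (fun x : ℝ => x) μ) (θ : ℝ) :
    (∫ z, checkFn τ (z - θ) ∂μ)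
      = τ * ((∫ z, z ∂μ) - θ) + ∫ z, max (θ - z) 0 ∂μ := by
  have h1 : ∀ z : ℝ, checkFn τ (z - θ) = τ * (z - θ) + max (θ - z) 0 := by
    intro z; rw [checkFn_eq]; ring_nf
  have hi1 : Integrable (fun z : ℝ => τ * (z - θ)) μ :=
    (hint.sub (integrable_const θ)).const_mul τ
  calc (∫ z, checkFn τ (z - θ) ∂μ)
      = ∫ z, (τ * (z - θ) + max (θ - z) 0) ∂μ := by
        exact integral_congr_ae (Eventually.of_forall h1)
    _ = (∫ z, τ * (z - θ) ∂μ) + ∫ z, max (θ - z) 0 ∂μ :=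
        integral_add hi1 (integrable_posPart μ hint θ)
    _ = τ * ((∫ z, z ∂μ) - θ) + ∫ z, max (θ - z) 0 ∂μ := by
        rw [integral_const_mul, integral_sub hint (integrable_const θ), integral_const]
        simp

end main

/-- `F_μ⁻¹(τ)` minimizes the quantile regression loss
`L(θ) = ∫ ρ_τ(z - θ) dμ(z)` over `θ ∈ ℝ`. -/
theorem quantile_minimizes_quantile_regression_loss
    (μ : Measure ℝ) [IsProbabilityMeasure μ] (hint : Integrable (fun x : ℝ => x) μ)
    (τ : ℝ) (hτ : τ ∈ Set.Ioo (0 : ℝ) 1) :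
    ∀ θ : ℝ,
      (∫ z, checkFn τ (z - quantileFn μ τ) ∂μ) ≤ ∫ z, checkFn τ (z - θ) ∂μ := by
  intro θ
  obtain ⟨hτ0, hτ1⟩ := hτ
  set S : Set ℝ := {y : ℝ | τ ≤ cdfFn μ y} with hS
  set q : ℝ := quantileFn μ τ with hq
  have hq' : q = sInf S := rfl
  -- S is nonempty
  have hSne : S.Nonempty := by
    have h1 : ∀ᶠ y in atTop, τ ≤ cdf μ y :=
      (tendsto_cdf_atTop μ).eventually (eventually_ge_nhds hτ1)
    obtain ⟨y, hy⟩ := h1.exists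
    exact ⟨y, by rw [hS, mem_setOf_eq, cdfFn_eq_cdf]; exact hy⟩
  -- S is bounded below
  have hbdd : BddBelow S := by
    have h1 : ∀ᶠ y in atBot, cdf μ y < τ :=
      (tendsto_cdf_atBot μ).eventually (eventually_lt_nhds hτ0)
    obtain ⟨y0, hy0⟩ := h1.exists
    refine ⟨y0, fun s hs => ?_⟩
    by_contra hcon
    push_neg at hcon
    have : cdf μ s ≤ cdf μ y0 := monotone_cdf μ hcon.le
    rw [hS, mem_setOf_eq, cdfFn_eq_cdf] at hs
    linarith
  -- τ ≤ cdf μ q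
  have hq_mem : τ ≤ cdf μ q := by
    have hgt : ∀ y, q < y → τ ≤ cdf μ y := by
      intro y hy
      rw [hq', ] at hy
      obtain ⟨s, hsS, hsy⟩ := (csInf_lt_iff hbdd hSne).mp hy
      rw [hS, mem_setOf_eq, cdfFn_eq_cdf] at hsS
      exact hsS.trans (monotone_cdf μ hsy.le)
    have hcont : Tendsto (cdf μ) (𝓝[>] q) (𝓝 (cdf μ q)) :=
      ((cdf μ).right_continuous q).mono_left (nhdsWithin_mono _ Ioi_subset_Ici_self)
    exact ge_of_tendsto hcont (eventually_nhdsWithin_of_forall fun y hy => hgt y hy)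
  -- cdf < τ strictly below q
  have hlt : ∀ t, t < q → cdf μ t < τ := by
    intro t ht
    by_contra hcon
    push_neg at hcon
    have : q ≤ t := by
      rw [hq']
      exact csInf_le hbdd (by rw [hS, mem_setOf_eq, cdfFn_eq_cdf]; exact hcon)
    linarith
  -- reduce to the h-function inequality
  rw [loss_eq μ hint q, loss_eq μ hint θ]
  set h : ℝ → ℝ := fun a => ∫ z, max (a - z) 0 ∂μ with hh
  rcases le_or_gt q θ with hcase | hcase
  · -- q ≤ θ
    have hstep := step_lower μ hint hcase
    have hcq : τ ≤ cdfFn μ q := by rw [cdfFn_eq_cdf]; exact hq_mem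
    have hprod : (θ - q) * τ ≤ (θ - q) * cdfFn μ q :=
      mul_le_mul_of_nonneg_left hcq (by linarith)
    have : h q + (θ - q) * τ ≤ h θ := by
      have := hstep; simp only [hh] at *; linarith
    nlinarith
  · -- θ < q : need h q ≤ h θ + τ * (q - θ)
    have key : h q ≤ h θ + τ * (q - θ) := by
      refine le_of_forall_pos_le_add fun ε hε => ?_
      set δ : ℝ := min ε (q - θ) with hδ
      have hδ0 : 0 < δ := lt_min hε (by linarith)
      have hδle : δ ≤ q - θ := min_le_right _ _
      have hδε : δ ≤ ε := min_le_left _ _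
      set t : ℝ := q - δ with ht
      have hθt : θ ≤ t := by simp only [ht]; linarith
      have htq : t < q := by simp only [ht]; linarith
      have h1 : h q ≤ h t + (q - t) * cdfFn μ q := step_upper μ hint htq.le
      have h2 : h t ≤ h θ + (t - θ) * cdfFn μ t := step_upper μ hint hθt
      have hc1 : cdfFn μ q ≤ 1 := by rw [cdfFn_eq_cdf]; exact cdf_le_one μ q
      have hc2 : cdfFn μ t ≤ τ := by rw [cdfFn_eq_cdf]; exact (hlt t htq).le
      have hp1 : (q - t) * cdfFn μ q ≤ (q - t) * 1 :=
        mul_le_mul_of_nonneg_left hc1 (by linarith)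
      have hp2 : (t - θ) * cdfFn μ t ≤ (t - θ) * τ :=
        mul_le_mul_of_nonneg_left hc2 (by linarith)
      have hqt : q - t = δ := by simp only [ht]; ring
      nlinarith
    have : h q ≤ h θ + τ * (q - θ) := key
    nlinarith
end

section
/- Let X and A be countable nonempty sets, let P : X × A × X → [0,1] with ∑_{x'} P(x, a, x') = 1 for all (x, a), let π : X × A → [0,1] with ∑_{a'} π(x', a') = 1 for all x', let r : X × A → ℝ be bounded, let γ ∈ [0,1), and let N ≥ 1. Define the projected distributional Bellman operator Φ on bounded functions θ : X × A → ℝ^N by (Φθ)_i(x, a) = F_{μ_θ(x,a)}⁻¹((2i−1)/(2N)), where μ_θ(x, a) = ∑_{x'} ∑_{a'} P(x, a, x')·π(x', a') · (1/N) ∑_{j=1}^N δ_{r(x,a) + γ·θ_j(x', a')}. Then Φ has a unique fixed point in the space of bounded functions θ : X × A → ℝ^N. -/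
set_option linter.unusedSectionVars false


open MeasureTheory Set
open scoped ENNReal

/-- The distributional Bellman backup at `(x, a)` of the quantile value distribution with atoms
`θ`, i.e. `μ_θ(x,a) = ∑_{x',a'} P(x,a,x') π(x',a') (1/N) ∑ⱼ δ_{r(x,a) + γ θ_j(x',a')}`. -/
noncomputable def bellmanBackup {X A : Type*} [Countable X] [Countable A]
    (P : X → A → X → ℝ) (π : X → A → ℝ) (r : X → A → ℝ) (γ : ℝ) (N : ℕ)
    (θ : X × A → Fin N → ℝ) (x : X) (a : A) : Measure ℝ :=
  Measure.sum fun x' : X => Measure.sum fun a' : A =>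
    ENNReal.ofReal (P x a x' * π x' a') •
      ((N : ℝ≥0∞)⁻¹ • ∑ j : Fin N, Measure.dirac (r x a + γ * θ (x', a') j))

/-- The projected distributional Bellman operator: `(Φθ)ᵢ(x,a)` is the quantile midpoint
`F⁻¹((2i-1)/(2N))` of the Bellman backup `μ_θ(x,a)` (with `i : Fin N` 0-indexed). -/
noncomputable def projBellman {X A : Type*} [Countable X] [Countable A]
    (P : X → A → X → ℝ) (π : X → A → ℝ) (r : X → A → ℝ) (γ : ℝ) (N : ℕ)
    (θ : X × A → Fin N → ℝ) : X × A → Fin N → ℝ :=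
  fun q i => quantileFn (bellmanBackup P π r γ N θ q.1 q.2) ((2 * (i : ℝ) + 1) / (2 * N))

section helpers

variable {X A : Type*} [Countable X] [Countable A]
variable (P : X → A → X → ℝ) (π : X → A → ℝ) (r : X → A → ℝ) (γ : ℝ) (N : ℕ)

lemma backup_apply (θ : X × A → Fin N → ℝ) (x : X) (a : A) (s : Set ℝ) (hs : MeasurableSet s) :
    bellmanBackup P π r γ N θ x a s
      = ∑' x' : X, ∑' a' : A, ENNReal.ofReal (P x a x' * π x' a') *
          ((N : ℝ≥0∞)⁻¹ * ∑ j : Fin N, Measure.dirac (r x a + γ * θ (x', a') j) s) := by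
  unfold bellmanBackup
  rw [Measure.sum_apply _ hs]
  refine tsum_congr fun x' => ?_
  rw [Measure.sum_apply _ hs]
  refine tsum_congr fun a' => ?_
  rw [Measure.smul_apply, Measure.smul_apply, smul_eq_mul, smul_eq_mul,
    Measure.finset_sum_apply]

lemma weights_tsum_one (hP01 : ∀ x a x', P x a x' ∈ Set.Icc (0:ℝ) 1)
    (hP : ∀ x a, ∑' x', P x a x' = 1)
    (hπ01 : ∀ x' a', π x' a' ∈ Set.Icc (0:ℝ) 1)
    (hπ : ∀ x', ∑' a', π x' a' = 1) (x : X) (a : A) :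
    ∑' x' : X, ∑' a' : A, ENNReal.ofReal (P x a x' * π x' a') = 1 := by
  have hπs : ∀ x', Summable (π x') := by
    intro x'
    by_contra h
    have := hπ x'
    rw [tsum_eq_zero_of_not_summable h] at this
    exact one_ne_zero this.symm
  have hPs : Summable (P x a) := by
    by_contra h
    have := hP x a
    rw [tsum_eq_zero_of_not_summable h] at this
    exact one_ne_zero this.symm
  have h1 : ∀ x', ∑' a' : A, ENNReal.ofReal (π x' a') = 1 := by
    intro x'
    rw [← ENNReal.ofReal_tsum_of_nonneg (fun a' => (hπ01 x' a').1) (hπs x'), hπ x',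
      ENNReal.ofReal_one]
  calc ∑' x' : X, ∑' a' : A, ENNReal.ofReal (P x a x' * π x' a')
      = ∑' x' : X, ∑' a' : A, ENNReal.ofReal (P x a x') * ENNReal.ofReal (π x' a') := by
        refine tsum_congr fun x' => tsum_congr fun a' => ?_
        exact ENNReal.ofReal_mul (hP01 x a x').1
    _ = ∑' x' : X, ENNReal.ofReal (P x a x') := by
        refine tsum_congr fun x' => ?_
        rw [ENNReal.tsum_mul_left, h1 x', mul_one]
    _ = 1 := by
        rw [← ENNReal.ofReal_tsum_of_nonneg (fun x' => (hP01 x a x').1) hPs, hP x a,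
          ENNReal.ofReal_one]

lemma backup_meas_one (hP01 : ∀ x a x', P x a x' ∈ Set.Icc (0:ℝ) 1)
    (hP : ∀ x a, ∑' x', P x a x' = 1)
    (hπ01 : ∀ x' a', π x' a' ∈ Set.Icc (0:ℝ) 1)
    (hπ : ∀ x', ∑' a', π x' a' = 1) (hN : 1 ≤ N)
    (θ : X × A → Fin N → ℝ) (x : X) (a : A) (s : Set ℝ) (hs : MeasurableSet s)
    (hmem : ∀ x' a' (j : Fin N), r x a + γ * θ (x', a') j ∈ s) :
    bellmanBackup P π r γ N θ x a s = 1 := by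
  rw [backup_apply P π r γ N θ x a s hs]
  have hNne : (N : ℝ≥0∞) ≠ 0 := by
    simp only [ne_eq, Nat.cast_eq_zero]; omega
  have : ∀ x' a', ((N : ℝ≥0∞)⁻¹ * ∑ j : Fin N, Measure.dirac (r x a + γ * θ (x', a') j) s) = 1 := by
    intro x' a'
    have : ∀ j : Fin N, Measure.dirac (r x a + γ * θ (x', a') j) s = 1 :=
      fun j => Measure.dirac_apply_of_mem (hmem x' a' j)
    simp [this, ENNReal.inv_mul_cancel hNne (by simp : (N : ℝ≥0∞) ≠ ⊤)]
  simp only [this, mul_one]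
  exact weights_tsum_one P π hP01 hP hπ01 hπ x a

lemma backup_meas_zero (θ : X × A → Fin N → ℝ) (x : X) (a : A) (s : Set ℝ)
    (hs : MeasurableSet s)
    (hmem : ∀ x' a' (j : Fin N), r x a + γ * θ (x', a') j ∉ s) :
    bellmanBackup P π r γ N θ x a s = 0 := by
  rw [backup_apply P π r γ N θ x a s hs]
  have : ∀ x' a' (j : Fin N), Measure.dirac (r x a + γ * θ (x', a') j) s = 0 := by
    intro x' a' j
    rw [Measure.dirac_apply' _ hs, Set.indicator_of_notMem (hmem x' a' j)]
  simp [this]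

lemma backup_le_one (hP01 : ∀ x a x', P x a x' ∈ Set.Icc (0:ℝ) 1)
    (hP : ∀ x a, ∑' x', P x a x' = 1)
    (hπ01 : ∀ x' a', π x' a' ∈ Set.Icc (0:ℝ) 1)
    (hπ : ∀ x', ∑' a', π x' a' = 1) (hN : 1 ≤ N)
    (θ : X × A → Fin N → ℝ) (x : X) (a : A) (s : Set ℝ) :
    bellmanBackup P π r γ N θ x a s ≤ 1 := by
  calc bellmanBackup P π r γ N θ x a s ≤ bellmanBackup P π r γ N θ x a Set.univ :=
        measure_mono (Set.subset_univ s)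
    _ = 1 := backup_meas_one P π r γ N hP01 hP hπ01 hπ hN θ x a _ MeasurableSet.univ
        (fun _ _ _ => trivial)

lemma backup_Iic_mono (θ θ' : X × A → Fin N → ℝ) (x : X) (a : A) (y w : ℝ)
    (h : ∀ p (j : Fin N), r x a + γ * θ' p j ≤ y → r x a + γ * θ p j ≤ w) :
    bellmanBackup P π r γ N θ' x a (Iic y) ≤ bellmanBackup P π r γ N θ x a (Iic w) := by
  rw [backup_apply P π r γ N θ' x a _ measurableSet_Iic,
    backup_apply P π r γ N θ x a _ measurableSet_Iic]
  refine ENNReal.tsum_le_tsum fun x' => ENNReal.tsum_le_tsum fun a' => ?_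
  refine mul_le_mul_right (mul_le_mul_right (Finset.sum_le_sum fun j _ => ?_) _) _
  rw [Measure.dirac_apply' _ measurableSet_Iic, Measure.dirac_apply' _ measurableSet_Iic]
  by_cases hz : r x a + γ * θ' (x', a') j ≤ y
  · rw [Set.indicator_of_mem (Set.mem_Iic.mpr hz),
      Set.indicator_of_mem (Set.mem_Iic.mpr (h (x', a') j hz))]
    rfl
  · rw [Set.indicator_of_notMem (by simpa using hz)]
    exact zero_le'

end helpers

section quantile

variable {X A : Type*} [Countable X] [Countable A]
variable (P : X → A → X → ℝ) (π : X → A → ℝ) (r : X → A → ℝ) (γ : ℝ) (N : ℕ)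

lemma quantile_set_lb (hγ0 : 0 ≤ γ) (Mr : ℝ) (hr : ∀ x a, |r x a| ≤ Mr)
    (θ : X × A → Fin N → ℝ) (Mθ : ℝ) (hθ : ∀ p j, |θ p j| ≤ Mθ) (x : X) (a : A)
    (ω : ℝ) (hω0 : 0 < ω) :
    ∀ y ∈ {y : ℝ | ω ≤ cdfFn (bellmanBackup P π r γ N θ x a) y}, -(Mr + γ * Mθ) ≤ y := by
  intro y hy
  by_contra hlt
  push_neg at hlt
  have h0 : bellmanBackup P π r γ N θ x a (Iic y) = 0 := by
    apply backup_meas_zero P π r γ N θ x a _ measurableSet_Iic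
    intro x' a' j hmem
    rw [Set.mem_Iic] at hmem
    have h1 : |γ * θ (x', a') j| ≤ γ * Mθ := by
      rw [abs_mul, abs_of_nonneg hγ0]
      exact mul_le_mul_of_nonneg_left (hθ _ _) hγ0
    have h2 := abs_le.1 (hr x a)
    have h3 := abs_le.1 h1
    linarith
  rw [Set.mem_setOf_eq, cdfFn, h0] at hy
  simp only [ENNReal.toReal_zero] at hy
  linarith

lemma cdf_at_bound (hP01 : ∀ x a x', P x a x' ∈ Set.Icc (0:ℝ) 1)
    (hP : ∀ x a, ∑' x', P x a x' = 1)
    (hπ01 : ∀ x' a', π x' a' ∈ Set.Icc (0:ℝ) 1)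
    (hπ : ∀ x', ∑' a', π x' a' = 1) (hN : 1 ≤ N) (hγ0 : 0 ≤ γ)
    (Mr : ℝ) (hr : ∀ x a, |r x a| ≤ Mr)
    (θ : X × A → Fin N → ℝ) (Mθ : ℝ) (hθ : ∀ p j, |θ p j| ≤ Mθ) (x : X) (a : A) :
    cdfFn (bellmanBackup P π r γ N θ x a) (Mr + γ * Mθ) = 1 := by
  rw [cdfFn, backup_meas_one P π r γ N hP01 hP hπ01 hπ hN θ x a _ measurableSet_Iic]
  · simp
  · intro x' a' j
    rw [Set.mem_Iic]
    have h1 : |γ * θ (x', a') j| ≤ γ * Mθ := by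
      rw [abs_mul, abs_of_nonneg hγ0]
      exact mul_le_mul_of_nonneg_left (hθ _ _) hγ0
    have h2 := abs_le.1 (hr x a)
    have h3 := abs_le.1 h1
    linarith

lemma quantile_abs_le (hP01 : ∀ x a x', P x a x' ∈ Set.Icc (0:ℝ) 1)
    (hP : ∀ x a, ∑' x', P x a x' = 1)
    (hπ01 : ∀ x' a', π x' a' ∈ Set.Icc (0:ℝ) 1)
    (hπ : ∀ x', ∑' a', π x' a' = 1) (hN : 1 ≤ N) (hγ0 : 0 ≤ γ)
    (Mr : ℝ) (hr : ∀ x a, |r x a| ≤ Mr)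
    (θ : X × A → Fin N → ℝ) (Mθ : ℝ) (hθ : ∀ p j, |θ p j| ≤ Mθ) (x : X) (a : A)
    (ω : ℝ) (hω0 : 0 < ω) (hω1 : ω ≤ 1) :
    |quantileFn (bellmanBackup P π r γ N θ x a) ω| ≤ Mr + γ * Mθ := by
  have hmemB : (Mr + γ * Mθ) ∈ {y : ℝ | ω ≤ cdfFn (bellmanBackup P π r γ N θ x a) y} := by
    rw [Set.mem_setOf_eq, cdf_at_bound P π r γ N hP01 hP hπ01 hπ hN hγ0 Mr hr θ Mθ hθ x a]
    exact hω1
  have hlb := quantile_set_lb P π r γ N hγ0 Mr hr θ Mθ hθ x a ω hω0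
  have hbdd : BddBelow {y : ℝ | ω ≤ cdfFn (bellmanBackup P π r γ N θ x a) y} :=
    ⟨-(Mr + γ * Mθ), hlb⟩
  rw [abs_le, quantileFn]
  exact ⟨le_csInf ⟨_, hmemB⟩ hlb, csInf_le hbdd hmemB⟩

lemma quantile_lip_oneside (hP01 : ∀ x a x', P x a x' ∈ Set.Icc (0:ℝ) 1)
    (hP : ∀ x a, ∑' x', P x a x' = 1)
    (hπ01 : ∀ x' a', π x' a' ∈ Set.Icc (0:ℝ) 1)
    (hπ : ∀ x', ∑' a', π x' a' = 1) (hN : 1 ≤ N) (hγ0 : 0 ≤ γ)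
    (Mr : ℝ) (hr : ∀ x a, |r x a| ≤ Mr)
    (θ θ' : X × A → Fin N → ℝ) (Mθ Mθ' : ℝ)
    (hθ : ∀ p j, |θ p j| ≤ Mθ) (hθ' : ∀ p j, |θ' p j| ≤ Mθ')
    (K : ℝ) (hK : ∀ p j, θ p j ≤ θ' p j + K) (x : X) (a : A)
    (ω : ℝ) (hω0 : 0 < ω) (hω1 : ω ≤ 1) :
    quantileFn (bellmanBackup P π r γ N θ x a) ω
      ≤ quantileFn (bellmanBackup P π r γ N θ' x a) ω + γ * K := by
  set μ := bellmanBackup P π r γ N θ x a with hμ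
  set μ' := bellmanBackup P π r γ N θ' x a with hμ'
  have hbdd : BddBelow {y : ℝ | ω ≤ cdfFn μ y} :=
    ⟨-(Mr + γ * Mθ), quantile_set_lb P π r γ N hγ0 Mr hr θ Mθ hθ x a ω hω0⟩
  have hne' : {y : ℝ | ω ≤ cdfFn μ' y}.Nonempty := by
    refine ⟨Mr + γ * Mθ', ?_⟩
    rw [Set.mem_setOf_eq, hμ', cdf_at_bound P π r γ N hP01 hP hπ01 hπ hN hγ0 Mr hr θ' Mθ' hθ' x a]
    exact hω1
  have key : ∀ y ∈ {y : ℝ | ω ≤ cdfFn μ' y}, quantileFn μ ω - γ * K ≤ y := by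
    intro y hy
    have hcomp : μ' (Iic y) ≤ μ (Iic (y + γ * K)) := by
      rw [hμ, hμ']
      refine backup_Iic_mono P π r γ N θ θ' x a y (y + γ * K) fun p j hz => ?_
      have := mul_le_mul_of_nonneg_left (hK p j) hγ0
      rw [mul_add] at this
      linarith
    have hfin : μ (Iic (y + γ * K)) ≠ ⊤ := by
      rw [hμ]
      exact (lt_of_le_of_lt (backup_le_one P π r γ N hP01 hP hπ01 hπ hN θ x a _)
        ENNReal.one_lt_top).ne
    have hcdf : cdfFn μ' y ≤ cdfFn μ (y + γ * K) := ENNReal.toReal_mono hfin hcomp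
    have hmem2 : y + γ * K ∈ {y : ℝ | ω ≤ cdfFn μ y} := le_trans hy hcdf
    have := csInf_le hbdd hmem2
    rw [quantileFn]
    linarith
  have hfinal := le_csInf hne' key
  rw [quantileFn] at hfinal ⊢
  rw [quantileFn]
  linarith

lemma quantile_contract (hP01 : ∀ x a x', P x a x' ∈ Set.Icc (0:ℝ) 1)
    (hP : ∀ x a, ∑' x', P x a x' = 1)
    (hπ01 : ∀ x' a', π x' a' ∈ Set.Icc (0:ℝ) 1)
    (hπ : ∀ x', ∑' a', π x' a' = 1) (hN : 1 ≤ N) (hγ0 : 0 ≤ γ)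
    (Mr : ℝ) (hr : ∀ x a, |r x a| ≤ Mr)
    (θ θ' : X × A → Fin N → ℝ) (Mθ Mθ' : ℝ)
    (hθ : ∀ p j, |θ p j| ≤ Mθ) (hθ' : ∀ p j, |θ' p j| ≤ Mθ')
    (K : ℝ) (hK : ∀ p j, |θ p j - θ' p j| ≤ K) (x : X) (a : A)
    (ω : ℝ) (hω0 : 0 < ω) (hω1 : ω ≤ 1) :
    |quantileFn (bellmanBackup P π r γ N θ x a) ω
      - quantileFn (bellmanBackup P π r γ N θ' x a) ω| ≤ γ * K := by
  rw [abs_le]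
  constructor
  · have := quantile_lip_oneside P π r γ N hP01 hP hπ01 hπ hN hγ0 Mr hr θ' θ Mθ' Mθ hθ' hθ K
      (fun p j => by have := abs_le.1 (hK p j); linarith) x a ω hω0 hω1
    linarith
  · have := quantile_lip_oneside P π r γ N hP01 hP hπ01 hπ hN hγ0 Mr hr θ θ' Mθ Mθ' hθ hθ' K
      (fun p j => by have := abs_le.1 (hK p j); linarith) x a ω hω0 hω1
    linarith

end quantile

/-- with bounded rewards, the projected distributional Bellman operator `Φ` has a
unique fixed point among bounded quantile value distributions `θ : X × A → ℝ^N`. -/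
theorem projected_bellman_unique_fixed_point
    {X A : Type*} [Countable X] [Countable A] [Nonempty X] [Nonempty A]
    (P : X → A → X → ℝ) (hP01 : ∀ x a x', P x a x' ∈ Set.Icc (0:ℝ) 1)
    (hP : ∀ x a, ∑' x', P x a x' = 1)
    (π : X → A → ℝ) (hπ01 : ∀ x' a', π x' a' ∈ Set.Icc (0:ℝ) 1)
    (hπ : ∀ x', ∑' a', π x' a' = 1)
    (r : X → A → ℝ) (hr : ∃ M : ℝ, ∀ x a, |r x a| ≤ M)
    (γ : ℝ) (hγ : γ ∈ Set.Ico (0:ℝ) 1) (N : ℕ) (hN : 1 ≤ N) :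
    ∃! θ : X × A → Fin N → ℝ,
      (∃ M : ℝ, ∀ q j, |θ q j| ≤ M) ∧ projBellman P π r γ N θ = θ := by
  obtain ⟨hγ0, hγ1⟩ := hγ
  obtain ⟨Mr, hr⟩ := hr
  -- the quantile levels are in (0, 1]
  have hω : ∀ i : Fin N, 0 < (2 * (i : ℝ) + 1) / (2 * N) ∧ (2 * (i : ℝ) + 1) / (2 * N) ≤ 1 := by
    intro i
    have hNpos : (0:ℝ) < 2 * N := by positivity
    have hi : ((i : ℕ) : ℝ) + 1 ≤ (N : ℝ) := by exact_mod_cast i.isLt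
    constructor
    · apply div_pos (by positivity) hNpos
    · rw [div_le_one hNpos]; linarith
  letI : TopologicalSpace (X × A) := ⊥
  haveI : DiscreteTopology (X × A) := ⟨rfl⟩
  -- norms bound coordinates
  have hcoord : ∀ (θ : BoundedContinuousFunction (X × A) (Fin N → ℝ)) (p : X × A) (j : Fin N),
      |θ p j| ≤ ‖θ‖ := by
    intro θ p j
    calc |θ p j| = ‖θ p j‖ := (Real.norm_eq_abs _).symm
      _ ≤ ‖θ p‖ := norm_le_pi_norm (θ p) j
      _ ≤ ‖θ‖ := θ.norm_coe_le_norm p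
  -- Φ as a self-map of the bounded functions
  have hΦbdd : ∀ (θ : BoundedContinuousFunction (X × A) (Fin N → ℝ)) (q : X × A),
      ‖projBellman P π r γ N (⇑θ) q‖ ≤ Mr + γ * ‖θ‖ := by
    intro θ q
    rw [pi_norm_le_iff_of_nonneg]
    · intro j
      rw [Real.norm_eq_abs]
      exact quantile_abs_le P π r γ N hP01 hP hπ01 hπ hN hγ0 Mr hr (⇑θ) ‖θ‖
        (hcoord θ) q.1 q.2 _ (hω j).1 (hω j).2
    · have : (0:ℝ) ≤ ‖θ‖ := norm_nonneg _
      have : |r (Classical.arbitrary X) (Classical.arbitrary A)| ≤ Mr := hr _ _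
      have := abs_nonneg (r (Classical.arbitrary X) (Classical.arbitrary A))
      nlinarith
  set F : BoundedContinuousFunction (X × A) (Fin N → ℝ) →
      BoundedContinuousFunction (X × A) (Fin N → ℝ) :=
    fun θ => BoundedContinuousFunction.ofNormedAddCommGroup (projBellman P π r γ N (⇑θ))
      continuous_of_discreteTopology (Mr + γ * ‖θ‖) (hΦbdd θ) with hF
  have hFcoe : ∀ θ, ⇑(F θ) = projBellman P π r γ N (⇑θ) := fun θ => rfl
  -- contraction
  have hLip : LipschitzWith γ.toNNReal F := by
    apply LipschitzWith.of_dist_le_mul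
    intro θ θ'
    rw [Real.coe_toNNReal γ hγ0]
    rw [BoundedContinuousFunction.dist_le (mul_nonneg hγ0 dist_nonneg)]
    intro q
    rw [dist_pi_le_iff (mul_nonneg hγ0 dist_nonneg)]
    intro j
    rw [Real.dist_eq, hFcoe, hFcoe]
    exact quantile_contract P π r γ N hP01 hP hπ01 hπ hN hγ0 Mr hr (⇑θ) (⇑θ') ‖θ‖ ‖θ'‖
      (hcoord θ) (hcoord θ')
      (dist θ θ')
      (fun p j' => by
        rw [← Real.dist_eq]
        exact le_trans (dist_le_pi_dist (θ p) (θ' p) j')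
          (BoundedContinuousFunction.dist_coe_le_dist p))
      q.1 q.2 _ (hω j).1 (hω j).2
  have hC : ContractingWith γ.toNNReal F := ⟨by rwa [← Real.toNNReal_one, Real.toNNReal_lt_toNNReal_iff one_pos] , hLip⟩
  haveI : Nonempty (BoundedContinuousFunction (X × A) (Fin N → ℝ)) := ⟨0⟩
  set θstar := hC.fixedPoint F with hθstar
  have hfix : F θstar = θstar := hC.fixedPoint_isFixedPt
  refine ⟨⇑θstar, ⟨⟨‖θstar‖, hcoord θstar⟩, ?_⟩, ?_⟩
  · rw [← hFcoe, hfix]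
  · rintro θ ⟨⟨M, hM⟩, hfixθ⟩
    have hcont : Continuous θ := continuous_of_discreteTopology
    have hMnn : ∀ q : X × A, ‖θ q‖ ≤ max M 0 := by
      intro q
      rw [pi_norm_le_iff_of_nonneg (le_max_right _ _)]
      intro j
      rw [Real.norm_eq_abs]
      exact le_trans (hM q j) (le_max_left _ _)
    set θE : BoundedContinuousFunction (X × A) (Fin N → ℝ) :=
      BoundedContinuousFunction.ofNormedAddCommGroup θ hcont (max M 0) hMnn with hθE
    have hθEcoe : ⇑θE = θ := rfl
    have hfixE : Function.IsFixedPt F θE := by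
      apply BoundedContinuousFunction.ext
      intro q
      show (F θE) q = θE q
      have : ⇑(F θE) = projBellman P π r γ N θ := by rw [hFcoe, hθEcoe]
      rw [show ⇑(F θE) = θ from by rw [this, hfixθ], hθEcoe]
    have : θE = θstar := hC.fixedPoint_unique hfixE
    rw [← hθEcoe, this]
end
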